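/- Let C be an idempotent complete additive category with direct sums and enough compact objects. If A ∈ C has a local endomorphism ring, then A has the (full, infinite) exchange property: for every split monomorphism u : A → ⊕_{i∈I} B_i there exist decompositions B_i = C_i ⊕ D_i such that ⊕_{i∈I} B_i = A ⊕ (⊕_{i∈I} C_i) via u and the inclusions of the C_i. -/

import Mathlib

open CategoryTheory CategoryTheory.Limits

universe w v u

variable {C : Type u} [Category.{v} C] [Preadditive C] [HasBinaryBiproducts C]
  [HasCoproducts.{w} C]

/-- An object `K` is compact if every morphism from `K` into a direct sum factors through
the inclusion of a finite subsum. -/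
def IsCompactObj (K : C) : Prop :=
  ∀ {ι : Type w} (A : ι → C) (f : K ⟶ ∐ A),
    ∃ (J : Finset ι) (g : K ⟶ ∐ (fun j : J => A j.1)),
      f = g ≫ Sigma.desc (fun j : J => Sigma.ι A j.1)

/-- `C` has enough compact objects: every nonzero object receives a nonzero morphism from
some compact object. -/
def EnoughCompacts : Prop :=
  ∀ B : C, ¬ IsZero B → ∃ (K : C) (f : K ⟶ B), IsCompactObj K ∧ f ≠ 0

theorem my_isUnit_or_of_isUnit_add {R : Type*} [Ring R] [IsLocalRing R] {a b : R}
    (h : IsUnit (a + b)) : IsUnit a ∨ IsUnit b := by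
  rcases h with ⟨v, hv⟩
  have h1 : a * ↑v⁻¹ + b * ↑v⁻¹ = 1 := by
    rw [← add_mul, ← hv, Units.mul_inv]
  rcases IsLocalRing.isUnit_or_isUnit_of_add_one h1 with h | h
  · exact Or.inl (by simpa using h.mul v.isUnit)
  · exact Or.inr (by simpa using h.mul v.isUnit)

theorem my_sum_unit {R : Type*} [Ring R] [IsLocalRing R] {α : Type*} (s : Finset α)
    (f : α → R) (h : IsUnit (∑ x ∈ s, f x)) : ∃ x ∈ s, IsUnit (f x) := by
  classical
  induction s using Finset.induction_on with
  | empty => rw [Finset.sum_empty] at h; exact absurd h (by simpa using not_isUnit_zero)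
  | insert _ _ hx ih =>
      rw [Finset.sum_insert hx] at h
      rcases my_isUnit_or_of_isUnit_add h with h | h
      · exact ⟨_, Finset.mem_insert_self _ _, h⟩
      · rcases ih h with ⟨y, hy, hy'⟩
        exact ⟨y, Finset.mem_insert_of_mem hy, hy'⟩

theorem my_biprod_iso {B Y Z : C} (e : B ⟶ B) (c : Y ⟶ B) (s : B ⟶ Y)
    (hcs : c ≫ s = 𝟙 Y) (hsc : s ≫ c = e) (d : Z ⟶ B) (t : B ⟶ Z)
    (hdt : d ≫ t = 𝟙 Z) (htd : t ≫ d = 𝟙 B - e) : IsIso (biprod.desc c d) := by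
  have hee : e ≫ e = e := by
    rw [← hsc, Category.assoc, ← Category.assoc c, hcs, Category.id_comp]
  have hce : c ≫ e = c := by rw [← hsc, ← Category.assoc, hcs, Category.id_comp]
  have hes : e ≫ s = s := by rw [← hsc, Category.assoc, hcs, Category.comp_id]
  have ht1e : (𝟙 B - e) ≫ t = t := by
    rw [← htd, Category.assoc, hdt, Category.comp_id]
  have hd1e : d ≫ (𝟙 B - e) = d := by
    rw [← htd, ← Category.assoc, hdt, Category.id_comp]
  have hct : c ≫ t = 0 := by
    conv_lhs => rw [← ht1e]
    rw [← Category.assoc, Preadditive.comp_sub, Category.comp_id, hce, sub_self,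
      zero_comp]
  have hde : d ≫ e = 0 := by
    conv_lhs => rw [← hd1e]
    rw [Category.assoc, Preadditive.sub_comp, Category.id_comp, hee, sub_self,
      comp_zero]
  have hds : d ≫ s = 0 := by rw [← hes, ← Category.assoc, hde, zero_comp]
  refine ⟨biprod.lift s t, ?_, ?_⟩
  · apply biprod.hom_ext' <;> apply biprod.hom_ext <;>
      simp [hcs, hct, hds, hdt]
  · rw [biprod.lift_desc, hsc, htd]; abel

/-- In an idempotent complete additive category with direct sums and enough compact
objects, an object `A` with local endomorphism ring has the full (infinite) exchange
property: for every split monomorphism `u : A ⟶ ⊕_{i ∈ I} B i` there are decompositions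
`B i = C i ⊕ D i` with `⊕_i B i = A ⊕ (⊕_i C i)` via `u` and the inclusions of the `C i`. -/
theorem stmt_15 [IsIdempotentComplete C] (hC : EnoughCompacts (C := C))
    (A : C) (hloc : IsLocalRing (End A)) {ι : Type w} (B : ι → C)
    (u : A ⟶ ∐ B) (hu : IsSplitMono u) :
    ∃ (Cc Dd : ι → C) (v : ∀ i, Cc i ⟶ B i) (w : ∀ i, Dd i ⟶ B i),
      (∀ i, IsIso (biprod.desc (v i) (w i))) ∧
      IsIso (biprod.desc u (Sigma.desc (fun i => v i ≫ Sigma.ι B i))) := by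
  classical
  set p : (∐ B) ⟶ A := retraction u with hpdef
  have hup : u ≫ p = 𝟙 A := IsSplitMono.id u
  -- A is nonzero
  have hA : ¬ IsZero A := by
    intro h
    have h01 : (0 : End A) = 1 := h.eq_of_src 0 (𝟙 A)
    exact one_ne_zero h01.symm
  obtain ⟨K, t, hK, ht⟩ := hC A hA
  obtain ⟨J, g, hg⟩ := hK B (t ≫ u)
  set inclJ : (∐ fun j : J => B j.1) ⟶ ∐ B := Sigma.desc (fun j : J => Sigma.ι B j.1)
    with hinclJ
  set πJ : (∐ B) ⟶ ∐ fun j : J => B j.1 :=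
    Sigma.desc (fun i => if h : i ∈ J then Sigma.ι (fun j : J => B j.1) ⟨i, h⟩ else 0)
    with hπJ
  have hJid : inclJ ≫ πJ = 𝟙 _ := by
    apply Sigma.hom_ext
    intro j
    simp [hinclJ, hπJ]
  -- σ is a unit
  set σ : End A := u ≫ πJ ≫ inclJ ≫ p with hσdef
  have hσ : IsUnit σ := by
    by_contra hns
    have hadd : σ + (1 - σ) = 1 := by abel
    have h1σ : IsUnit (1 - σ) := by
      rcases IsLocalRing.isUnit_or_isUnit_of_add_one hadd with h | h
      · exact absurd h hns
      · exact h
    have h2 : t ≫ (u ≫ πJ ≫ inclJ ≫ p) = t ≫ (u ≫ p) := by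
      calc t ≫ (u ≫ πJ ≫ inclJ ≫ p) = (t ≫ u) ≫ (πJ ≫ inclJ ≫ p) := by
            simp only [Category.assoc]
        _ = g ≫ (inclJ ≫ πJ) ≫ (inclJ ≫ p) := by rw [hg]; simp only [Category.assoc]
        _ = g ≫ inclJ ≫ p := by rw [hJid, Category.id_comp]
        _ = (t ≫ u) ≫ p := by rw [← Category.assoc, ← hg]
        _ = t ≫ u ≫ p := by simp only [Category.assoc]
    have hzero : t ≫ ((1 - σ : End A) : A ⟶ A) = 0 := by
      have h1 : ((1 - σ : End A) : A ⟶ A) = 𝟙 A - (u ≫ πJ ≫ inclJ ≫ p) := rfl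
      rw [h1, Preadditive.comp_sub, Category.comp_id, h2, hup, Category.comp_id,
        sub_self]
    rcases h1σ with ⟨v, hv⟩
    have hvid : ((1 - σ : End A) : A ⟶ A) ≫ (↑v⁻¹ : End A) = 𝟙 A := by
      show ((↑v⁻¹ : End A) * (1 - σ) : End A) = 1
      rw [← hv, Units.inv_mul]
    have h3 : t ≫ (((1 - σ : End A) : A ⟶ A) ≫ (↑v⁻¹ : End A)) = 0 := by
      rw [← Category.assoc, hzero, zero_comp]
    rw [hvid, Category.comp_id] at h3
    exact ht h3
  -- extract a single coordinate k
  rcases hσ with ⟨vσ, hvσ⟩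
  set ρ : (∐ fun j : J => B j.1) ⟶ A := inclJ ≫ p ≫ (↑vσ⁻¹ : End A) with hρ
  have hmρ : (u ≫ πJ) ≫ ρ = 𝟙 A := by
    show (u ≫ πJ) ≫ inclJ ≫ p ≫ (↑vσ⁻¹ : End A) = 𝟙 A
    have : ((↑vσ⁻¹ : End A) * (↑vσ : End A) : End A) = 1 := Units.inv_mul vσ
    rw [hvσ] at this
    calc (u ≫ πJ) ≫ inclJ ≫ p ≫ (↑vσ⁻¹ : End A)
        = (u ≫ πJ ≫ inclJ ≫ p) ≫ (↑vσ⁻¹ : End A) := by simp [Category.assoc]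
      _ = 𝟙 A := this
  -- finite projections
  set πJ' : ∀ j : J, (∐ fun j : J => B j.1) ⟶ B j.1 := fun j =>
    Sigma.desc (fun j' => if h : j' = j then eqToHom (by rw [h]) else 0) with hπJ'
  have hsumJ : ∑ j : J, (πJ' j ≫ Sigma.ι (fun j : J => B j.1) j) = 𝟙 _ := by
    apply Sigma.hom_ext
    intro j₀
    rw [Preadditive.comp_sum]
    rw [Finset.sum_eq_single j₀]
    · simp [hπJ']
    · intro j _ hne
      rw [← Category.assoc]
      have : Sigma.ι (fun j : J => B j.1) j₀ ≫ πJ' j = 0 := by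
        simp [hπJ', Ne.symm hne]
      rw [this, zero_comp]
    · intro h; exact absurd (Finset.mem_univ j₀) h
  have hone : (1 : End A) = ∑ j : J, ((u ≫ πJ) ≫ (πJ' j ≫ Sigma.ι (fun j : J => B j.1) j) ≫ ρ : A ⟶ A) := by
    have : (u ≫ πJ) ≫ (∑ j : J, (πJ' j ≫ Sigma.ι (fun j : J => B j.1) j)) ≫ ρ = 𝟙 A := by
      rw [hsumJ, Category.id_comp, hmρ]
    rw [show (1 : End A) = 𝟙 A from rfl, ← this, Preadditive.sum_comp,
      Preadditive.comp_sum]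
  obtain ⟨j, -, hj⟩ := my_sum_unit (R := End A) Finset.univ _ (by rw [← hone]; exact isUnit_one)
  obtain ⟨k, hkJ⟩ := j
  -- global projections
  set Pr : ∀ i : ι, (∐ B) ⟶ B i := fun i =>
    Sigma.desc (fun i' => if h : i' = i then eqToHom (by rw [h]) else 0) with hPr
  have hPr_self : ∀ i : ι, Sigma.ι B i ≫ Pr i = 𝟙 (B i) := by
    intro i; simp [hPr]
  have hPr_ne : ∀ i i' : ι, i ≠ i' → Sigma.ι B i ≫ Pr i' = 0 := by
    intro i i' h; simp [hPr, h]
  have hPrk : πJ ≫ πJ' ⟨k, hkJ⟩ = Pr k := by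
    apply Sigma.hom_ext
    intro i
    rw [← Category.assoc]
    by_cases h : i = k
    · subst h
      have h1 : Sigma.ι B i ≫ πJ = Sigma.ι (fun j : J => B j.1) ⟨i, hkJ⟩ := by
        simp [hπJ, hkJ]
      rw [h1, hPr_self]
      simp [hπJ']
    · rw [hPr_ne i k h]
      by_cases hiJ : i ∈ J
      · have h1 : Sigma.ι B i ≫ πJ = Sigma.ι (fun j : J => B j.1) ⟨i, hiJ⟩ := by
          simp [hπJ, hiJ]
        rw [h1]
        have hne : (⟨i, hiJ⟩ : J) ≠ ⟨k, hkJ⟩ := fun hc => h (congrArg Subtype.val hc)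
        simp [hπJ', hne]
      · have h1 : Sigma.ι B i ≫ πJ = 0 := by simp [hπJ, hiJ]
        rw [h1, zero_comp]
  -- the split mono into B k
  set n : A ⟶ B k := u ≫ Pr k with hn
  rcases hj with ⟨vδ, hvδ⟩
  set r : B k ⟶ A := Sigma.ι (fun j : J => B j.1) ⟨k, hkJ⟩ ≫ ρ ≫ (↑vδ⁻¹ : End A) with hr
  have hnr : n ≫ r = 𝟙 A := by
    have hinv : ((↑vδ⁻¹ : End A) * (↑vδ : End A) : End A) = 1 := Units.inv_mul vδ
    rw [hvδ] at hinv
    calc n ≫ r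
        = ((u ≫ πJ) ≫ (πJ' ⟨k, hkJ⟩ ≫ Sigma.ι (fun j : J => B j.1) ⟨k, hkJ⟩) ≫ ρ) ≫
            (↑vδ⁻¹ : End A) := by
          rw [hn, ← hPrk, hr]; simp only [Category.assoc]
      _ = 𝟙 A := hinv
  -- idempotents on each B i
  set e : ∀ i, B i ⟶ B i := fun i => 𝟙 (B i) - (Sigma.ι B i ≫ Pr k) ≫ r ≫ (u ≫ Pr i)
    with he
  have hek : e k = 𝟙 (B k) - r ≫ n := by
    rw [he]
    simp only [hPr_self, Category.id_comp, ← hn]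
  have he_ne : ∀ i, i ≠ k → e i = 𝟙 (B i) := by
    intro i h
    rw [he]
    simp only [hPr_ne i k h, zero_comp, sub_zero]
  have hrnrn : (r ≫ n) ≫ r ≫ n = r ≫ n := by
    rw [Category.assoc, ← Category.assoc n r, hnr, Category.id_comp]
  have heidem : ∀ i, e i ≫ e i = e i := by
    intro i
    by_cases h : i = k
    · subst h
      rw [hek, Preadditive.sub_comp, Category.id_comp, Preadditive.comp_sub,
        Category.comp_id, hrnrn]
      abel
    · rw [he_ne i h, Category.id_comp]
  have h1eidem : ∀ i, (𝟙 (B i) - e i) ≫ (𝟙 (B i) - e i) = 𝟙 (B i) - e i := by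
    intro i
    rw [Preadditive.sub_comp, Category.id_comp, Preadditive.comp_sub, Category.comp_id,
      heidem i]
    abel
  -- split the idempotents
  have hsplit : ∀ i, ∃ (Y : C) (c : Y ⟶ B i) (s : B i ⟶ Y), c ≫ s = 𝟙 Y ∧ s ≫ c = e i :=
    fun i => by
      obtain ⟨Y, c, s, h1, h2⟩ :=
        IsIdempotentComplete.idempotents_split (B i) (e i) (heidem i)
      exact ⟨Y, c, s, h1, h2⟩
  have hsplit' : ∀ i, ∃ (Y : C) (d : Y ⟶ B i) (t : B i ⟶ Y),
      d ≫ t = 𝟙 Y ∧ t ≫ d = 𝟙 (B i) - e i :=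
    fun i => by
      obtain ⟨Y, d, t, h1, h2⟩ :=
        IsIdempotentComplete.idempotents_split (B i) (𝟙 (B i) - e i) (h1eidem i)
      exact ⟨Y, d, t, h1, h2⟩
  choose Cc c s hcs hsc using hsplit
  choose Dd d td hdt htd using hsplit'
  refine ⟨Cc, Dd, c, d, fun i => my_biprod_iso (e i) (c i) (s i) (hcs i) (hsc i)
    (d i) (td i) (hdt i) (htd i), ?_⟩
  -- basic consequences
  have hce : ∀ i, c i ≫ e i = c i := by
    intro i; rw [← hsc i, ← Category.assoc, hcs i, Category.id_comp]
  have hes : ∀ i, e i ≫ s i = s i := by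
    intro i; rw [← hsc i, Category.assoc, hcs i, Category.comp_id]
  have hekr : e k ≫ r = 0 := by
    rw [hek, Preadditive.sub_comp, Category.id_comp, Category.assoc, hnr,
      Category.comp_id, sub_self]
  have hckr : c k ≫ r = 0 := by
    rw [← hce k, Category.assoc, hekr, comp_zero]
  have hnek : n ≫ e k = 0 := by
    rw [hek, Preadditive.comp_sub, Category.comp_id, ← Category.assoc, hnr,
      Category.id_comp, sub_self]
  have hnsk : n ≫ s k = 0 := by
    rw [← hes k, ← Category.assoc, hnek, zero_comp]
  -- the global maps
  set jC : (∐ Cc) ⟶ ∐ B := Sigma.desc (fun i => c i ≫ Sigma.ι B i) with hjC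
  have hιjC : ∀ i, Sigma.ι Cc i ≫ jC = c i ≫ Sigma.ι B i := by
    intro i; simp [hjC]
  set q : (∐ B) ⟶ A := Pr k ≫ r with hq
  set Poff : (∐ B) ⟶ ∐ Cc :=
    Sigma.desc (fun i => if h : i = k then 0 else s i ≫ Sigma.ι Cc i) with hPoff
  set sM : (∐ B) ⟶ ∐ Cc :=
    Pr k ≫ s k ≫ Sigma.ι Cc k + Poff - Pr k ≫ r ≫ u ≫ Poff with hsM
  have hιPoff_k : Sigma.ι B k ≫ Poff = 0 := by simp [hPoff]
  have hιPoff_ne : ∀ i, i ≠ k → Sigma.ι B i ≫ Poff = s i ≫ Sigma.ι Cc i := by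
    intro i h; simp [hPoff, h]
  have hq_k : Sigma.ι B k ≫ q = r := by
    rw [hq, ← Category.assoc, hPr_self, Category.id_comp]
  have hq_ne : ∀ i, i ≠ k → Sigma.ι B i ≫ q = 0 := by
    intro i h
    rw [hq, ← Category.assoc, hPr_ne i k h, zero_comp]
  have hsM_k : Sigma.ι B k ≫ sM = s k ≫ Sigma.ι Cc k - r ≫ u ≫ Poff := by
    rw [hsM, Preadditive.comp_sub, Preadditive.comp_add,
      ← Category.assoc (Sigma.ι B k) (Pr k) (s k ≫ Sigma.ι Cc k),
      ← Category.assoc (Sigma.ι B k) (Pr k) (r ≫ u ≫ Poff),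
      hPr_self, Category.id_comp, Category.id_comp, hιPoff_k, add_zero]
  have hsM_ne : ∀ i, i ≠ k → Sigma.ι B i ≫ sM = s i ≫ Sigma.ι Cc i := by
    intro i h
    rw [hsM, Preadditive.comp_sub, Preadditive.comp_add,
      ← Category.assoc (Sigma.ι B i) (Pr k) (s k ≫ Sigma.ι Cc k),
      ← Category.assoc (Sigma.ι B i) (Pr k) (r ≫ u ≫ Poff),
      hPr_ne i k h, zero_comp, zero_comp, zero_add, hιPoff_ne i h, sub_zero]
  have hPoffjC : Poff ≫ jC = 𝟙 (∐ B) - Pr k ≫ Sigma.ι B k := by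
    apply Sigma.hom_ext
    intro i
    rw [← Category.assoc, Preadditive.comp_sub, Category.comp_id,
      ← Category.assoc (Sigma.ι B i) (Pr k) (Sigma.ι B k)]
    by_cases h : i = k
    · subst h
      rw [hιPoff_k, zero_comp, hPr_self, Category.id_comp, sub_self]
    · rw [hιPoff_ne i h, hPr_ne i k h, zero_comp, sub_zero, Category.assoc, hιjC i,
        ← Category.assoc, hsc i, he_ne i h, Category.id_comp]
  have huq : u ≫ q = 𝟙 A := by
    rw [hq, ← Category.assoc, ← hn, hnr]
  have husM : u ≫ sM = 0 := by
    rw [hsM, Preadditive.comp_sub, Preadditive.comp_add,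
      ← Category.assoc u (Pr k) (s k ≫ Sigma.ι Cc k),
      ← Category.assoc u (Pr k) (r ≫ u ≫ Poff), ← hn,
      ← Category.assoc n (s k) (Sigma.ι Cc k), hnsk, zero_comp, zero_add,
      ← Category.assoc n r (u ≫ Poff), hnr, Category.id_comp, sub_self]
  have hjCq : jC ≫ q = 0 := by
    apply Sigma.hom_ext
    intro i
    rw [← Category.assoc, hιjC i, Category.assoc, comp_zero]
    by_cases h : i = k
    · subst h
      rw [hq_k, hckr]
    · rw [hq_ne i h, comp_zero]
  have hjCsM : jC ≫ sM = 𝟙 (∐ Cc) := by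
    apply Sigma.hom_ext
    intro i
    rw [← Category.assoc, hιjC i, Category.assoc, Category.comp_id]
    by_cases h : i = k
    · subst h
      rw [hsM_k, Preadditive.comp_sub, ← Category.assoc (c i) (s i) (Sigma.ι Cc i),
        hcs i, Category.id_comp, ← Category.assoc (c i) r (u ≫ Poff), hckr,
        zero_comp, sub_zero]
    · rw [hsM_ne i h, ← Category.assoc, hcs i, Category.id_comp]
  have hΨΦ : biprod.lift q sM ≫ biprod.desc u jC = 𝟙 (∐ B) := by
    rw [biprod.lift_desc]
    apply Sigma.hom_ext
    intro i
    rw [Preadditive.comp_add, Category.comp_id, ← Category.assoc (Sigma.ι B i) q u,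
      ← Category.assoc (Sigma.ι B i) sM jC]
    by_cases h : i = k
    · subst h
      rw [hq_k, hsM_k, Preadditive.sub_comp, Category.assoc (s i) (Sigma.ι Cc i) jC,
        hιjC i, Category.assoc r (u ≫ Poff) jC, Category.assoc u Poff jC, hPoffjC,
        Preadditive.comp_sub, Category.comp_id, ← Category.assoc u (Pr i) (Sigma.ι B i),
        ← hn, Preadditive.comp_sub, ← Category.assoc (s i) (c i) (Sigma.ι B i), hsc i,
        hek, Preadditive.sub_comp, Category.id_comp]
      simp only [Category.assoc]
      abel
    · rw [hq_ne i h, zero_comp, zero_add, hsM_ne i h, Category.assoc (s i), hιjC i,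
        ← Category.assoc (s i) (c i) (Sigma.ι B i), hsc i, he_ne i h, Category.id_comp]
  have hΦΨ : biprod.desc u jC ≫ biprod.lift q sM = 𝟙 (A ⊞ (∐ Cc)) := by
    apply biprod.hom_ext' <;> apply biprod.hom_ext <;>
      simp [huq, husM, hjCq, hjCsM]
  have hfin : biprod.desc u (Sigma.desc (fun i => c i ≫ Sigma.ι B i)) = biprod.desc u jC :=
    rfl
  rw [hfin]
  exact ⟨biprod.lift q sM, hΦΨ, hΨΦ⟩
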